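/- For all k ≥ 2 and all n ≥ 1, the number of permutations of [n] avoiding 132, 213, and 23…k1 equals Σ_{i=1}^n F_{k-2,i}, where F_{k-2,i} denotes the (k−2)-generalized Fibonacci numbers. -/

import Mathlib

/-- A permutation `π` of `Fin n` avoids the pattern given (in one-line notation) by the
list `s` when there is no increasing choice of positions along which the values of `π`
have the same pairwise comparisons as the entries of `s`. -/
def AvoidsPat {n : ℕ} (π : Equiv.Perm (Fin n)) (s : List ℕ) : Prop :=
  ¬ ∃ f : Fin s.length ↪o Fin n,
      ∀ i j : Fin s.length, s.get i < s.get j ↔ π (f i) < π (f j)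

/-- The number of permutations of `Fin n` avoiding every pattern in `R`. -/
noncomputable def AvoidCount (R : List (List ℕ)) (n : ℕ) : ℕ :=
  Nat.card {π : Equiv.Perm (Fin n) // ∀ s ∈ R, AvoidsPat π s}

/-- The `k`-generalized Fibonacci numbers: `F_{k,n} = 0` for `n ≤ 0`, `F_{k,1} = 1`,
`F_{k,n} = ∑_{i=1}^{k} F_{k,n-i}` for `n ≥ 2` (terms with nonpositive index are `0`). -/
def genFib (k : ℕ) : ℕ → ℕ
  | 0 => 0
  | 1 => 1
  | n + 2 => ∑ i ∈ Finset.range k, genFib k (n + 1 - i)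

def Cond1 {n : ℕ} (π : Equiv.Perm (Fin n)) : Prop :=
  ∀ i j : Fin n, (i : ℕ) + 1 = j → ((π j : ℕ) = (π i : ℕ) + 1 ∨ (π j : ℕ) < (π i : ℕ))

def Cond2 {n : ℕ} (K : ℕ) (π : Equiv.Perm (Fin n)) : Prop :=
  ∀ p r q : Fin n, (r : ℕ) = (p : ℕ) + K → (p : ℕ) + K < (q : ℕ) →
    ¬ ((π r : ℕ) = (π p : ℕ) + K ∧ (π q : ℕ) < (π p : ℕ))

/-- Key structural lemma: under `Cond1`, for `i ≤ j` either `π j < π i` or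
the whole interval `[i,j]` is an increasing run of consecutive values. -/
theorem run_lemma {n : ℕ} {π : Equiv.Perm (Fin n)} (h1 : Cond1 π) :
    ∀ (d : ℕ) (i j : Fin n), (j : ℕ) = (i : ℕ) + d →
      ((π j : ℕ) < (π i : ℕ) ∨
        ∀ t : Fin n, (i : ℕ) ≤ t → (t : ℕ) ≤ j → (π t : ℕ) = (π i : ℕ) + ((t : ℕ) - i)) := by
  intro d
  induction d with
  | zero =>
    intro i j hij
    right
    intro t ht1 ht2
    have : t = i := Fin.ext (by omega)
    subst this; omega
  | succ d ih =>
    intro i j hij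
    have hj' : (i : ℕ) + d < n := by have := j.isLt; omega
    set j' : Fin n := ⟨(i : ℕ) + d, hj'⟩ with hj'def
    have hstep := h1 j' j (by simp [hj'def]; omega)
    rcases ih i j' rfl with hlt | hrun
    · -- π j' < π i
      rcases hstep with heq | hlt2
      · -- π j = π j' + 1 ≤ π i, and π j ≠ π i
        left
        have hne : π j ≠ π i := by
          intro hc
          have : j = i := π.injective hc
          have := congrArg (Fin.val) this
          omega
        have : (π j : ℕ) ≠ (π i : ℕ) := fun hc => hne (Fin.ext hc)
        omega
      · left; omega
    · -- run from i to j'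
      have hπj' : (π j' : ℕ) = (π i : ℕ) + d := by
        have := hrun j' (by simp [hj'def]) (by simp [hj'def])
        simpa [hj'def] using this
      rcases hstep with heq | hlt2
      · -- extend the run
        right
        intro t ht1 ht2
        by_cases htj : (t : ℕ) ≤ (j' : ℕ)
        · exact hrun t ht1 htj
        · have : t = j := Fin.ext (by simp [hj'def] at htj ⊢; omega)
          subst this
          simp [hj'def] at *
          omega
      · -- π j < π j' = π i + d : show π j < π i
        left
        by_contra hge
        push_neg at hge
        -- π i ≤ π j < π i + d, π j ≠ π i
        have hne : (π j : ℕ) ≠ (π i : ℕ) := by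
          intro hc
          have : j = i := π.injective (Fin.ext hc)
          have := congrArg (Fin.val) this
          omega
        set s : ℕ := (π j : ℕ) - (π i : ℕ) with hs
        have hs1 : 1 ≤ s := by omega
        have hs2 : s < d + 1 := by omega
        have hts : (i : ℕ) + s < n := by have := j.isLt; omega
        set t : Fin n := ⟨(i : ℕ) + s, hts⟩ with htdef
        have ht' : (t : ℕ) = (i : ℕ) + s := rfl
        have := hrun t (by omega) (by simp [hj'def]; omega)
        have hπt : (π t : ℕ) = (π j : ℕ) := by omega
        have : t = j := π.injective (Fin.ext hπt)
        have := congrArg (Fin.val) this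
        simp [htdef] at this
        omega

lemma sm3 {n : ℕ} {a b c : Fin n} (hab : a < b) (hbc : b < c) :
    StrictMono ![a, b, c] := by
  intro x y h
  fin_cases x <;> fin_cases y <;> simp_all <;>
    first | exact hab | exact hbc | exact hab.trans hbc

lemma vec3_zero {α : Type*} (a b c : α) (h : 0 < 3) : ![a,b,c] ⟨0,h⟩ = a := rfl
lemma vec3_one {α : Type*} (a b c : α) (h : 1 < 3) : ![a,b,c] ⟨1,h⟩ = b := rfl
lemma vec3_two {α : Type*} (a b c : α) (h : 2 < 3) : ![a,b,c] ⟨2,h⟩ = c := rfl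

lemma has132 {n : ℕ} {π : Equiv.Perm (Fin n)} {a b c : Fin n} (hab : a < b) (hbc : b < c)
    (h1 : (π a : ℕ) < π c) (h2 : (π c : ℕ) < π b) : ¬ AvoidsPat π [1, 3, 2] := by
  intro hav
  refine hav ⟨OrderEmbedding.ofStrictMono ![a, b, c] (sm3 hab hbc), ?_⟩
  intro x y
  fin_cases x <;> fin_cases y <;>
    simp only [OrderEmbedding.coe_ofStrictMono, List.get_eq_getElem, Fin.lt_def,
      vec3_zero, vec3_one, vec3_two, List.getElem_cons_zero, List.getElem_cons_succ] <;>
    omega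

lemma has213 {n : ℕ} {π : Equiv.Perm (Fin n)} {a b c : Fin n} (hab : a < b) (hbc : b < c)
    (h1 : (π b : ℕ) < π a) (h2 : (π a : ℕ) < π c) : ¬ AvoidsPat π [2, 1, 3] := by
  intro hav
  refine hav ⟨OrderEmbedding.ofStrictMono ![a, b, c] (sm3 hab hbc), ?_⟩
  intro x y
  fin_cases x <;> fin_cases y <;>
    simp only [OrderEmbedding.coe_ofStrictMono, List.get_eq_getElem, Fin.lt_def,
      vec3_zero, vec3_one, vec3_two, List.getElem_cons_zero, List.getElem_cons_succ] <;>
    omega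

theorem cond1_of_avoids {n : ℕ} {π : Equiv.Perm (Fin n)}
    (h132 : AvoidsPat π [1, 3, 2]) (h213 : AvoidsPat π [2, 1, 3]) : Cond1 π := by
  intro i j hij
  by_contra hcon
  push_neg at hcon
  obtain ⟨hne1, hge⟩ := hcon
  have hij' : i < j := by rw [Fin.lt_def]; omega
  have hne0 : (π j : ℕ) ≠ (π i : ℕ) := by
    intro hc
    have : j = i := π.injective (Fin.ext hc)
    have := congrArg (Fin.val) this; omega
  have hgt : (π i : ℕ) + 1 < (π j : ℕ) := by omega
  have hv : (π i : ℕ) + 1 < n := lt_trans hgt (π j).isLt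
  set m : Fin n := π.symm ⟨(π i : ℕ) + 1, hv⟩ with hm
  have hπm : (π m : ℕ) = (π i : ℕ) + 1 := by
    simp [hm]
  have hmi : m ≠ i := by
    intro hc; rw [hc] at hπm; omega
  have hmj : m ≠ j := by
    intro hc; rw [hc] at hπm; omega
  have hcases : (m : ℕ) < i ∨ (j : ℕ) < m := by
    have h1 : (m : ℕ) ≠ i := fun hc => hmi (Fin.ext hc)
    have h2 : (m : ℕ) ≠ j := fun hc => hmj (Fin.ext hc)
    omega
  rcases hcases with hlt | hgt'
  · exact has213 (show m < i by rw [Fin.lt_def]; omega) hij' (by omega) (by omega) h213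
  · exact has132 hij' (show j < m by rw [Fin.lt_def]; omega) (by omega) (by omega) h132

theorem avoids132_of_cond1 {n : ℕ} {π : Equiv.Perm (Fin n)} (h1 : Cond1 π) :
    AvoidsPat π [1, 3, 2] := by
  rintro ⟨f, hf⟩
  have h01 : f ⟨0, by norm_num⟩ < f ⟨1, by norm_num⟩ := f.strictMono (by rw [Fin.lt_def]; norm_num)
  have h12 : f ⟨1, by norm_num⟩ < f ⟨2, by norm_num⟩ := f.strictMono (by rw [Fin.lt_def]; norm_num)
  set a := f ⟨0, by norm_num⟩
  set b := f ⟨1, by norm_num⟩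
  set c := f ⟨2, by norm_num⟩
  -- values: π a < π c < π b
  have hac : π a < π c := (hf ⟨0, by norm_num⟩ ⟨2, by norm_num⟩).1 (by norm_num)
  have hcb : π c < π b := (hf ⟨2, by norm_num⟩ ⟨1, by norm_num⟩).1 (by norm_num)
  rcases run_lemma h1 ((c : ℕ) - a) a c (by have := h01.trans h12; rw [Fin.lt_def] at this; omega)
    with hlt | hrun
  · rw [Fin.lt_def] at hac; omega
  · have hb := hrun b (le_of_lt h01) (le_of_lt h12)
    have hc := hrun c (le_of_lt (h01.trans h12)) le_rfl
    rw [Fin.lt_def] at hcb h01 h12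
    omega

theorem avoids213_of_cond1 {n : ℕ} {π : Equiv.Perm (Fin n)} (h1 : Cond1 π) :
    AvoidsPat π [2, 1, 3] := by
  rintro ⟨f, hf⟩
  have h01 : f ⟨0, by norm_num⟩ < f ⟨1, by norm_num⟩ := f.strictMono (by rw [Fin.lt_def]; norm_num)
  have h12 : f ⟨1, by norm_num⟩ < f ⟨2, by norm_num⟩ := f.strictMono (by rw [Fin.lt_def]; norm_num)
  set a := f ⟨0, by norm_num⟩
  set b := f ⟨1, by norm_num⟩
  set c := f ⟨2, by norm_num⟩
  -- values: π b < π a < π c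
  have hba : π b < π a := (hf ⟨1, by norm_num⟩ ⟨0, by norm_num⟩).1 (by norm_num)
  have hac : π a < π c := (hf ⟨0, by norm_num⟩ ⟨2, by norm_num⟩).1 (by norm_num)
  rcases run_lemma h1 ((c : ℕ) - a) a c (by have := h01.trans h12; rw [Fin.lt_def] at this; omega)
    with hlt | hrun
  · rw [Fin.lt_def] at hac; omega
  · have hb := hrun b (le_of_lt h01) (le_of_lt h12)
    rw [Fin.lt_def] at hba h01 h12
    omega

def sK (k : ℕ) : List ℕ := ((List.range (k - 1)).map (· + 2)) ++ [1]

lemma sK_length (k : ℕ) : (sK k).length = (k - 1) + 1 := by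
  simp [sK]

lemma sK_get_lt (k i : ℕ) (h : i < k - 1) (h' : i < (sK k).length) :
    (sK k).get ⟨i, h'⟩ = i + 2 := by
  simp only [sK, List.get_eq_getElem]
  rw [List.getElem_append_left (by simpa using h)]
  simp

lemma sK_get_last (k : ℕ) (h' : k - 1 < (sK k).length) :
    (sK k).get ⟨k - 1, h'⟩ = 1 := by
  simp only [sK, List.get_eq_getElem]
  rw [List.getElem_append_right (by simp)]
  simp

lemma emb_gap {L n : ℕ} (f : Fin L ↪o Fin n) :
    ∀ (d : ℕ) (x y : Fin L), (y : ℕ) = (x : ℕ) + d → (f x : ℕ) + d ≤ (f y : ℕ) := by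
  intro d
  induction d with
  | zero => intro x y h; have : y = x := Fin.ext (by omega); subst this; omega
  | succ d ih =>
    intro x y h
    have hy' : (x : ℕ) + d < L := by have := y.isLt; omega
    have h1 := ih x ⟨(x : ℕ) + d, hy'⟩ rfl
    have h2 : f ⟨(x : ℕ) + d, hy'⟩ < f y := f.strictMono (by rw [Fin.lt_def]; simp; omega)
    rw [Fin.lt_def] at h2
    omega

theorem cond2_of_avoids {n k : ℕ} {π : Equiv.Perm (Fin n)} (hk : 2 ≤ k) (h1 : Cond1 π)
    (hav : AvoidsPat π (sK k)) : Cond2 (k - 2) π := by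
  intro p r q hr hq hcon
  obtain ⟨hπr, hπq⟩ := hcon
  -- run from p to r
  have hrun : ∀ t : Fin n, (p : ℕ) ≤ t → (t : ℕ) ≤ r → (π t : ℕ) = (π p : ℕ) + ((t : ℕ) - p) := by
    rcases run_lemma h1 (k - 2) p r hr with hlt | hrun
    · omega
    · exact hrun
  apply hav
  have hlen : (sK k).length = (k - 1) + 1 := sK_length k
  -- build the embedding
  have hg : ∀ t : ℕ, t < k - 1 → (p : ℕ) + t < n := by
    intro t ht
    have := q.isLt; omega
  set g : Fin (sK k).length → Fin n := fun t =>
    if h : (t : ℕ) < k - 1 then ⟨(p : ℕ) + t, hg t h⟩ else q with hgdef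
  have hgsm : StrictMono g := by
    intro x y hxy
    rw [Fin.lt_def] at hxy
    have hx' := x.isLt
    have hy' := y.isLt
    have hx2 : (x : ℕ) < k - 1 + 1 := by omega
    have hy2 : (y : ℕ) < k - 1 + 1 := by omega
    by_cases hyk : (y : ℕ) < k - 1
    · rw [hgdef]
      simp only
      rw [dif_pos (by omega), dif_pos hyk, Fin.lt_def]
      simp; omega
    · have hxk : (x : ℕ) < k - 1 := by omega
      rw [hgdef]
      simp only
      rw [dif_pos hxk, dif_neg hyk, Fin.lt_def]
      simp; omega
  refine ⟨OrderEmbedding.ofStrictMono g hgsm, ?_⟩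
  -- value computation
  have hval : ∀ x : Fin (sK k).length, ((x : ℕ) < k - 1 → (π (g x) : ℕ) = (π p : ℕ) + x) ∧
      ((x : ℕ) = k - 1 → (π (g x) : ℕ) = (π q : ℕ)) := by
    intro x
    constructor
    · intro hx
      rw [hgdef]; simp only; rw [dif_pos hx]
      have := hrun ⟨(p : ℕ) + x, hg x hx⟩ (by simp) (by simp; omega)
      simpa using this
    · intro hx
      rw [hgdef]; simp only; rw [dif_neg (by omega)]
  have hget : ∀ x : Fin (sK k).length, ((x : ℕ) < k - 1 → (sK k).get x = (x : ℕ) + 2) ∧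
      ((x : ℕ) = k - 1 → (sK k).get x = 1) := by
    intro x
    constructor
    · intro hx
      have : x = ⟨(x : ℕ), x.isLt⟩ := rfl
      rw [this]; exact sK_get_lt k x hx x.isLt
    · intro hx
      have : x = ⟨k - 1, by omega⟩ := Fin.ext hx
      rw [this]; exact sK_get_last k (by omega)
  intro x y
  have hx' := x.isLt
  have hy' := y.isLt
  have hx2 : (x : ℕ) < k - 1 + 1 := by omega
  have hy2 : (y : ℕ) < k - 1 + 1 := by omega
  simp only [OrderEmbedding.coe_ofStrictMono]
  rw [Fin.lt_def]
  by_cases hxk : (x : ℕ) < k - 1 <;> by_cases hyk : (y : ℕ) < k - 1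
  · rw [(hget x).1 hxk, (hget y).1 hyk, (hval x).1 hxk, (hval y).1 hyk]; omega
  · rw [(hget x).1 hxk, (hget y).2 (by omega), (hval x).1 hxk, (hval y).2 (by omega)]; omega
  · rw [(hget x).2 (by omega), (hget y).1 hyk, (hval x).2 (by omega), (hval y).1 hyk]; omega
  · rw [(hget x).2 (by omega), (hget y).2 (by omega), (hval x).2 (by omega), (hval y).2 (by omega)]
    omega

theorem avoidsK_of_cond12 {n k : ℕ} {π : Equiv.Perm (Fin n)} (hk : 2 ≤ k) (h1 : Cond1 π)
    (h2 : Cond2 (k - 2) π) : AvoidsPat π (sK k) := by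
  rintro ⟨f, hf⟩
  have hlen : (sK k).length = (k - 1) + 1 := sK_length k
  have h0 : (0 : ℕ) < (sK k).length := by omega
  have he : k - 2 < (sK k).length := by omega
  have hl : k - 1 < (sK k).length := by omega
  set x0 : Fin (sK k).length := ⟨0, h0⟩
  set xe : Fin (sK k).length := ⟨k - 2, he⟩
  set xl : Fin (sK k).length := ⟨k - 1, hl⟩
  set p := f x0 with hp
  set e := f xe with he'
  set q := f xl with hq'
  -- get values
  have hget0 : (sK k).get x0 = 2 := by
    have := sK_get_lt k 0 (by omega) h0
    simpa using this
  have hgetl : (sK k).get xl = 1 := sK_get_last k hl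
  -- π q < π p
  have hπq : (π q : ℕ) < (π p : ℕ) := by
    have := (hf xl x0).1 (by rw [hget0, hgetl]; omega)
    rwa [Fin.lt_def] at this
  -- position gap
  have hgap : (p : ℕ) + (k - 2) ≤ (e : ℕ) := emb_gap f (k - 2) x0 xe (by show k - 2 = 0 + (k - 2); omega)
  have heq : e < q := f.strictMono (by rw [Fin.lt_def]; show k - 2 < k - 1; omega)
  rw [Fin.lt_def] at heq
  have hqlt : (p : ℕ) + (k - 2) < q := by omega
  have hrn : (p : ℕ) + (k - 2) < n := lt_trans hqlt q.isLt
  set r : Fin n := ⟨(p : ℕ) + (k - 2), hrn⟩ with hr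
  -- show π r = π p + (k - 2)
  have hπr : (π r : ℕ) = (π p : ℕ) + (k - 2) := by
    by_cases hk2 : k = 2
    · have : r = p := Fin.ext (by simp [hr, hk2])
      rw [this]; omega
    · -- k ≥ 3 : π p < π e so run from p to e
      have hk3 : 3 ≤ k := by omega
      have hπe : (π p : ℕ) < (π e : ℕ) := by
        have hgete : (sK k).get xe = (k - 2) + 2 := sK_get_lt k (k - 2) (by omega) he
        have := (hf x0 xe).1 (by rw [hget0, hgete]; omega)
        rwa [Fin.lt_def] at this
      rcases run_lemma h1 ((e : ℕ) - p) p e (by omega) with hlt | hrun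
      · omega
      · have hrv : (r : ℕ) = (p : ℕ) + (k - 2) := rfl
        have := hrun r (by omega) (by omega)
        omega
  exact h2 p r q (by simp [hr]) hqlt ⟨hπr, hπq⟩

noncomputable section
open Classical in
/-- positions where a descent starts -/
noncomputable def Desc {n : ℕ} (π : Equiv.Perm (Fin n)) : Finset (Fin n) :=
  Finset.univ.filter (fun i => ∃ j : Fin n, (j : ℕ) = (i : ℕ) + 1 ∧ (π j : ℕ) < (π i : ℕ))

lemma mem_Desc {n : ℕ} {π : Equiv.Perm (Fin n)} {i : Fin n} :
    i ∈ Desc π ↔ ∃ j : Fin n, (j : ℕ) = (i : ℕ) + 1 ∧ (π j : ℕ) < (π i : ℕ) := by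
  simp [Desc]

/-- size of the first block -/
noncomputable def fbs {n : ℕ} (π : Equiv.Perm (Fin n)) : ℕ :=
  if h : (Desc π).Nonempty then ((Desc π).min' h : ℕ) + 1 else n

lemma run_of_nodesc {n : ℕ} {π : Equiv.Perm (Fin n)} (h1 : Cond1 π) {c : ℕ}
    (hnd : ∀ i j : Fin n, (i : ℕ) + 1 = (j : ℕ) → (j : ℕ) < c → (π j : ℕ) = (π i : ℕ) + 1) :
    ∀ (i : ℕ) (hi : i < n) (h0 : 0 < n), i < c → (π ⟨i, hi⟩ : ℕ) = (π ⟨0, h0⟩ : ℕ) + i := by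
  intro i
  induction i with
  | zero => intro hi h0 _; rfl
  | succ i ih =>
    intro hi h0 hic
    have hi' : i < n := by omega
    have := hnd ⟨i, hi'⟩ ⟨i + 1, hi⟩ rfl hic
    rw [this, ih hi' h0 (by omega)]
    omega

lemma nodesc_of_fbs {n : ℕ} {π : Equiv.Perm (Fin n)} (h1 : Cond1 π) {c : ℕ} (hc : fbs π = c) :
    ∀ i j : Fin n, (i : ℕ) + 1 = (j : ℕ) → (j : ℕ) < c → (π j : ℕ) = (π i : ℕ) + 1 := by
  intro i j hij hjc
  rcases h1 i j hij with h | h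
  · exact h
  · exfalso
    have hiD : i ∈ Desc π := mem_Desc.2 ⟨j, hij.symm, h⟩
    have hne : (Desc π).Nonempty := ⟨i, hiD⟩
    have hmin := Finset.min'_le _ _ hiD
    unfold fbs at hc
    rw [dif_pos hne] at hc
    have : ((Desc π).min' hne : ℕ) ≤ (i : ℕ) := by
      rwa [Fin.le_def] at hmin
    omega

/-- main structure lemma: if `fbs π = c < n` then `π` starts with the top `c` values
in increasing order and everything later is smaller. -/
lemma struct_lemma {n : ℕ} {π : Equiv.Perm (Fin n)} (h1 : Cond1 π) {c : ℕ}
    (hc : fbs π = c) (hcn : c < n) :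
    (1 ≤ c) ∧ (∀ (i : ℕ) (hi : i < n), i < c → (π ⟨i, hi⟩ : ℕ) = n - c + i) ∧
      (∀ (j : ℕ) (hj : j < n), c ≤ j → (π ⟨j, hj⟩ : ℕ) < n - c) := by
  have h0 : 0 < n := by omega
  -- Desc must be nonempty
  have hne : (Desc π).Nonempty := by
    by_contra hcon
    unfold fbs at hc
    rw [dif_neg hcon] at hc
    omega
  have hcval : ((Desc π).min' hne : ℕ) + 1 = c := by
    unfold fbs at hc
    rwa [dif_pos hne] at hc
  have hc1 : 1 ≤ c := by omega
  -- the descent at position c-1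
  have hmem := (Desc π).min'_mem hne
  rw [mem_Desc] at hmem
  obtain ⟨jd, hjd, hjdlt⟩ := hmem
  have hjdval : (jd : ℕ) = c := by omega
  have hrun := run_of_nodesc h1 (nodesc_of_fbs h1 hc)
  -- π (c-1) = π 0 + (c-1)
  have hcm1 : c - 1 < n := by omega
  have hπcm1 : (π ⟨c - 1, hcm1⟩ : ℕ) = (π ⟨0, h0⟩ : ℕ) + (c - 1) :=
    hrun (c - 1) hcm1 h0 (by omega)
  -- the min descent is at c-1
  have hmineq : (Desc π).min' hne = ⟨c - 1, hcm1⟩ := Fin.ext (by simp only [Fin.val_mk]; omega)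
  rw [hmineq] at hjdlt
  have hjdeq : jd = ⟨c, by omega⟩ := Fin.ext (by simp only [Fin.val_mk]; omega)
  rw [hjdeq] at hjdlt
  -- every position ≥ c has value < π 0
  have hafter : ∀ (j : ℕ) (hj : j < n), c ≤ j → (π ⟨j, hj⟩ : ℕ) < (π ⟨0, h0⟩ : ℕ) := by
    intro j hj hcj
    rcases run_lemma h1 j ⟨0, h0⟩ ⟨j, hj⟩ (by simp) with h | h
    · simpa using h
    · exfalso
      have := h ⟨c, by omega⟩ (by simp) (by simp; omega)
      simp at this
      omega
  -- π 0 = n - c : look at where value n-1 sits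
  have hv : n - 1 < n := by omega
  set w := π.symm ⟨n - 1, hv⟩ with hw
  have hπw : (π w : ℕ) = n - 1 := by simp [hw]
  have hπ0 : (π ⟨0, h0⟩ : ℕ) = n - c := by
    have hwc : (w : ℕ) < c := by
      by_contra hcon
      push_neg at hcon
      have hha := hafter w w.isLt hcon
      simp only [Fin.eta] at hha
      have h0b := (π ⟨0, h0⟩).isLt
      omega
    have hrw : (π w : ℕ) = (π ⟨0, h0⟩ : ℕ) + (w : ℕ) := by
      have := hrun w w.isLt h0 hwc
      simpa only [Fin.eta] using this
    -- π 0 + w = n - 1, π 0 + (c-1) ≤ n-1 so w ≥ c-1, hence w = c-1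
    have hb := (π ⟨c - 1, hcm1⟩).isLt
    omega
  refine ⟨hc1, ?_, ?_⟩
  · intro i hi hic
    rw [hrun i hi h0 hic, hπ0]
  · intro j hj hcj
    rw [← hπ0]
    exact hafter j hj hcj

lemma eq_one_of_fbs_n {n : ℕ} {π : Equiv.Perm (Fin n)} (h0 : 0 < n) (h1 : Cond1 π)
    (hc : fbs π = n) : π = 1 := by
  by_cases hne : (Desc π).Nonempty
  · exfalso
    unfold fbs at hc
    rw [dif_pos hne] at hc
    have hmem := (Desc π).min'_mem hne
    rw [mem_Desc] at hmem
    obtain ⟨jd, hjd, _⟩ := hmem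
    have := jd.isLt
    omega
  · -- no descents: the whole thing is a run
    have hnd : ∀ i j : Fin n, (i : ℕ) + 1 = (j : ℕ) → (j : ℕ) < n → (π j : ℕ) = (π i : ℕ) + 1 := by
      intro i j hij hjn
      rcases h1 i j hij with h | h
      · exact h
      · exact (hne ⟨i, mem_Desc.2 ⟨j, hij.symm, h⟩⟩).elim
    have hrun := run_of_nodesc h1 hnd
    have hπ0 : (π ⟨0, h0⟩ : ℕ) = 0 := by
      have := hrun (n - 1) (by omega) h0 (by omega)
      have hb := (π ⟨n - 1, by omega⟩).isLt
      omega
    ext x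
    have hx := hrun (x : ℕ) x.isLt h0 x.isLt
    simp only [Fin.eta] at hx
    have h1x : ((1 : Equiv.Perm (Fin n)) x : ℕ) = (x : ℕ) := rfl
    omega

lemma fbs_one {n : ℕ} (h0 : 0 < n) : fbs (1 : Equiv.Perm (Fin n)) = n := by
  have : Desc (1 : Equiv.Perm (Fin n)) = ∅ := by
    ext i
    simp [mem_Desc]
    intro j hj
    omega
  unfold fbs
  rw [this]
  simp

lemma cond1_one {n : ℕ} : Cond1 (1 : Equiv.Perm (Fin n)) := by
  intro i j hij
  left; simp [hij.symm]

lemma cond2_one {n : ℕ} (K : ℕ) : Cond2 K (1 : Equiv.Perm (Fin n)) := by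
  intro p r q hr hq hcon
  simp at hcon
  omega

end

section Ext
variable {n c : ℕ}

def extPerm (hc1 : 1 ≤ c) (hcn : c ≤ n) (π' : Equiv.Perm (Fin (n - c))) :
    Equiv.Perm (Fin n) where
  toFun i :=
    if h : (i : ℕ) < c then ⟨n - c + i, by omega⟩
    else ⟨(π' ⟨(i : ℕ) - c, by have := i.isLt; omega⟩ : ℕ), by
      have := (π' ⟨(i : ℕ) - c, by have := i.isLt; omega⟩).isLt; omega⟩
  invFun v :=
    if h : n - c ≤ (v : ℕ) then ⟨(v : ℕ) - (n - c), by have := v.isLt; omega⟩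
    else ⟨c + (π'.symm ⟨(v : ℕ), by omega⟩ : ℕ), by
      have := (π'.symm ⟨(v : ℕ), by omega⟩).isLt; omega⟩
  left_inv := by
    intro i
    dsimp only
    by_cases h : (i : ℕ) < c
    · rw [dif_pos h, dif_pos (by simp only [Fin.val_mk]; omega)]
      apply Fin.ext
      simp only [Fin.val_mk]
      omega
    · have hb := (π' ⟨(i : ℕ) - c, by have := i.isLt; omega⟩).isLt
      rw [dif_neg h, dif_neg (by simp only [Fin.val_mk]; omega)]
      apply Fin.ext
      simp
      omega
  right_inv := by
    intro v
    dsimp only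
    by_cases h : n - c ≤ (v : ℕ)
    · rw [dif_pos h, dif_pos (by simp only [Fin.val_mk]; have := v.isLt; omega)]
      apply Fin.ext
      simp only [Fin.val_mk]
      have := v.isLt
      omega
    · have hb := (π'.symm ⟨(v : ℕ), by omega⟩).isLt
      rw [dif_neg h, dif_neg (by simp only [Fin.val_mk]; omega)]
      apply Fin.ext
      simp

lemma extPerm_lt (hc1 : 1 ≤ c) (hcn : c ≤ n) (π' : Equiv.Perm (Fin (n - c)))
    (i : Fin n) (h : (i : ℕ) < c) : (extPerm hc1 hcn π' i : ℕ) = n - c + i := by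
  show ((dite ((i : ℕ) < c) _ _ : Fin n) : ℕ) = _
  rw [dif_pos h]

lemma extPerm_ge (hc1 : 1 ≤ c) (hcn : c ≤ n) (π' : Equiv.Perm (Fin (n - c)))
    (i : Fin n) (h : c ≤ (i : ℕ)) :
    (extPerm hc1 hcn π' i : ℕ) = (π' ⟨(i : ℕ) - c, by have := i.isLt; omega⟩ : ℕ) := by
  show ((dite ((i : ℕ) < c) _ _ : Fin n) : ℕ) = _
  rw [dif_neg (by omega)]

lemma extPerm_ge' (hc1 : 1 ≤ c) (hcn : c ≤ n) (π' : Equiv.Perm (Fin (n - c)))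
    (i : Fin n) (j : Fin (n - c)) (h : (i : ℕ) = c + j) :
    (extPerm hc1 hcn π' i : ℕ) = (π' j : ℕ) := by
  rw [extPerm_ge hc1 hcn π' i (by omega)]
  exact congrArg Fin.val (congrArg π' (Fin.ext (by simp only [Fin.val_mk]; omega)))

end Ext

section Transfer
variable {n c K : ℕ}

lemma cond1_ext (hc1 : 1 ≤ c) (hcn : c ≤ n) (π' : Equiv.Perm (Fin (n - c)))
    (h1 : Cond1 π') : Cond1 (extPerm hc1 hcn π') := by
  intro i j hij
  by_cases hj : (j : ℕ) < c
  · left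
    rw [extPerm_lt hc1 hcn π' i (by omega), extPerm_lt hc1 hcn π' j hj]
    omega
  · by_cases hi : (i : ℕ) < c
    · -- i = c-1, j = c : descent
      right
      rw [extPerm_lt hc1 hcn π' i hi, extPerm_ge hc1 hcn π' j (by omega)]
      have := (π' ⟨(j : ℕ) - c, by have := j.isLt; omega⟩).isLt
      omega
    · -- both in the tail
      rw [extPerm_ge hc1 hcn π' i (by omega), extPerm_ge hc1 hcn π' j (by omega)]
      exact h1 ⟨(i : ℕ) - c, by have := i.isLt; omega⟩ ⟨(j : ℕ) - c, by have := j.isLt; omega⟩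
        (by simp only [Fin.val_mk]; omega)

lemma cond2_ext (hc1 : 1 ≤ c) (hcn : c ≤ n) (hcK : c ≤ K) (π' : Equiv.Perm (Fin (n - c)))
    (h2 : Cond2 K π') : Cond2 K (extPerm hc1 hcn π') := by
  intro p r q hr hq hcon
  obtain ⟨hπr, hπq⟩ := hcon
  by_cases hp : (p : ℕ) < c
  · -- r lands in the tail, value too small
    have hrge : c ≤ (r : ℕ) := by omega
    rw [extPerm_lt hc1 hcn π' p hp, extPerm_ge hc1 hcn π' r hrge] at hπr
    have := (π' ⟨(r : ℕ) - c, by have := r.isLt; omega⟩).isLt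
    omega
  · -- everything in the tail: transfer to π'
    have hpge : c ≤ (p : ℕ) := by omega
    have hrge : c ≤ (r : ℕ) := by omega
    have hqge : c ≤ (q : ℕ) := by omega
    rw [extPerm_ge hc1 hcn π' p hpge, extPerm_ge hc1 hcn π' r hrge] at hπr
    rw [extPerm_ge hc1 hcn π' q hqge, extPerm_ge hc1 hcn π' p hpge] at hπq
    exact h2 ⟨(p : ℕ) - c, by have := p.isLt; omega⟩ ⟨(r : ℕ) - c, by have := r.isLt; omega⟩
      ⟨(q : ℕ) - c, by have := q.isLt; omega⟩ (by simp only [Fin.val_mk]; omega)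
      (by simp only [Fin.val_mk]; omega) ⟨hπr, hπq⟩

lemma fbs_ext (hc1 : 1 ≤ c) (hcn : c < n) (π' : Equiv.Perm (Fin (n - c))) :
    fbs (extPerm hc1 (le_of_lt hcn) π') = c := by
  set π := extPerm hc1 (le_of_lt hcn) π' with hπ
  have hb0 := (π' ⟨0, by omega⟩).isLt
  have hdesc : (⟨c - 1, by omega⟩ : Fin n) ∈ Desc π := by
    rw [mem_Desc]
    refine ⟨⟨c, by omega⟩, by simp only [Fin.val_mk]; omega, ?_⟩
    rw [hπ, extPerm_lt hc1 (le_of_lt hcn) π' ⟨c - 1, by omega⟩ (by simp only [Fin.val_mk]; omega),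
      extPerm_ge' hc1 (le_of_lt hcn) π' ⟨c, by omega⟩ ⟨0, by omega⟩
        (by simp only [Fin.val_mk]; omega)]
    simp only [Fin.val_mk]
    omega
  have hne : (Desc π).Nonempty := ⟨_, hdesc⟩
  have hnolow : ∀ i : Fin n, i ∈ Desc π → c - 1 ≤ (i : ℕ) := by
    intro i hi
    rw [mem_Desc] at hi
    obtain ⟨j, hj, hlt⟩ := hi
    by_contra hcon
    push_neg at hcon
    rw [hπ, extPerm_lt hc1 (le_of_lt hcn) π' i (by omega),
      extPerm_lt hc1 (le_of_lt hcn) π' j (by omega)] at hlt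
    omega
  have hmin : (Desc π).min' hne = ⟨c - 1, by omega⟩ := by
    apply le_antisymm
    · exact Finset.min'_le _ _ hdesc
    · rw [Fin.le_def]
      exact hnolow _ ((Desc π).min'_mem hne)
  unfold fbs
  rw [dif_pos hne, hmin]
  simp only [Fin.val_mk]
  omega

lemma cond1_res {π : Equiv.Perm (Fin n)} {π' : Equiv.Perm (Fin (n - c))} (hcn : c ≤ n)
    (hcomp : ∀ j : Fin (n - c), (π' j : ℕ) = (π ⟨c + j, by have := j.isLt; omega⟩ : ℕ))
    (h1 : Cond1 π) : Cond1 π' := by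
  intro i j hij
  rw [hcomp i, hcomp j]
  exact h1 ⟨c + i, by have := i.isLt; omega⟩ ⟨c + j, by have := j.isLt; omega⟩
    (by simp only [Fin.val_mk]; omega)

lemma cond2_res {π : Equiv.Perm (Fin n)} {π' : Equiv.Perm (Fin (n - c))} (hcn : c ≤ n)
    (hcomp : ∀ j : Fin (n - c), (π' j : ℕ) = (π ⟨c + j, by have := j.isLt; omega⟩ : ℕ))
    (h2 : Cond2 K π) : Cond2 K π' := by
  intro p r q hr hq hcon
  obtain ⟨hπr, hπq⟩ := hcon
  rw [hcomp p, hcomp r] at hπr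
  rw [hcomp q, hcomp p] at hπq
  exact h2 ⟨c + p, by have := p.isLt; omega⟩ ⟨c + r, by have := r.isLt; omega⟩
    ⟨c + q, by have := q.isLt; omega⟩ (by simp only [Fin.val_mk]; omega)
    (by simp only [Fin.val_mk]; omega) ⟨hπr, hπq⟩

/-- the first block cannot be longer than `K` unless it is the whole permutation -/
lemma fbs_le_K {π : Equiv.Perm (Fin n)} (h1 : Cond1 π) (h2 : Cond2 K π) {c : ℕ}
    (hc : fbs π = c) (hcn : c < n) : c ≤ K := by
  by_contra hcon
  push_neg at hcon
  obtain ⟨hc1, hfirst, hafter⟩ := struct_lemma h1 hc hcn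
  have hp : (0 : ℕ) < n := by omega
  have hrn : K < n := by omega
  apply h2 ⟨0, hp⟩ ⟨K, hrn⟩ ⟨c, by omega⟩ (by simp) (by simp only [Fin.val_mk]; omega)
  constructor
  · rw [hfirst K hrn (by omega), hfirst 0 hp (by omega)]
    omega
  · have ha := hafter c (by omega) le_rfl
    have hb := hfirst 0 hp (by omega)
    omega

end Transfer

section GenFib

lemma genFib_rec (K i : ℕ) (h : 2 ≤ i) :
    genFib K i = ∑ c ∈ Finset.range K, genFib K (i - 1 - c) := by
  obtain ⟨m, rfl⟩ : ∃ m, i = m + 2 := ⟨i - 2, by omega⟩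
  show genFib K (m + 2) = _
  rw [genFib]
  apply Finset.sum_congr rfl
  intro c _
  congr 1

lemma genFib_sum_aux (K c : ℕ) :
    ∀ n : ℕ, ∑ i ∈ Finset.Icc 2 n, genFib K (i - 1 - c)
      = ∑ j ∈ Finset.Icc 1 (n - 1 - c), genFib K j := by
  intro n
  induction n with
  | zero => simp
  | succ n ih =>
    rcases Nat.lt_or_ge n 1 with hn | hn
    · interval_cases n
      simp
    · have h1 : Finset.Icc 2 (n + 1) = insert (n + 1) (Finset.Icc 2 n) := by
        ext x
        simp [Finset.mem_Icc, Finset.mem_insert]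
        omega
      rw [h1, Finset.sum_insert (by simp [Finset.mem_Icc]), ih]
      rcases Nat.lt_or_ge n (c + 1) with hc | hc
      · -- n - c = 0
        have e2 : n + 1 - 1 - c = 0 := by omega
        have e4 : n - 1 - c = 0 := by omega
        rw [e2, e4]
        simp [genFib]
      · -- n - c ≥ 1
        have h2 : Finset.Icc 1 (n + 1 - 1 - c) = insert (n - c) (Finset.Icc 1 (n - 1 - c)) := by
          ext x
          simp [Finset.mem_Icc, Finset.mem_insert]
          omega
        rw [h2, Finset.sum_insert (by simp [Finset.mem_Icc]; omega)]
        have : n + 1 - 1 - c = n - c := by omega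
        rw [this]

lemma genFib_sum_rec (K n : ℕ) (hn : 1 ≤ n) :
    ∑ i ∈ Finset.Icc 1 n, genFib K i
      = 1 + ∑ c ∈ Finset.Icc 1 (min K (n - 1)), ∑ i ∈ Finset.Icc 1 (n - c), genFib K i := by
  have h1 : Finset.Icc 1 n = insert 1 (Finset.Icc 2 n) := by
    ext x
    simp [Finset.mem_Icc, Finset.mem_insert]
    omega
  rw [h1, Finset.sum_insert (by simp [Finset.mem_Icc])]
  have h2 : ∑ i ∈ Finset.Icc 2 n, genFib K i
      = ∑ i ∈ Finset.Icc 2 n, ∑ c ∈ Finset.range K, genFib K (i - 1 - c) := by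
    apply Finset.sum_congr rfl
    intro i hi
    rw [Finset.mem_Icc] at hi
    exact genFib_rec K i hi.1
  rw [h2, Finset.sum_comm]
  have h3 : ∑ c ∈ Finset.range K, ∑ i ∈ Finset.Icc 2 n, genFib K (i - 1 - c)
      = ∑ c ∈ Finset.range K, ∑ i ∈ Finset.Icc 1 (n - 1 - c), genFib K i := by
    apply Finset.sum_congr rfl
    intro c _
    exact genFib_sum_aux K c n
  rw [h3]
  have h4 : ∑ c ∈ Finset.Icc 1 K, ∑ i ∈ Finset.Icc 1 (n - c), genFib K i
      = ∑ c ∈ Finset.range K, ∑ i ∈ Finset.Icc 1 (n - 1 - c), genFib K i := by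
    rw [← Finset.Ico_add_one_right_eq_Icc, Finset.sum_Ico_eq_sum_range]
    apply Finset.sum_congr (by congr 1)
    intro c _
    have : n - (1 + c) = n - 1 - c := by omega
    rw [this]
  rw [← h4]
  have h5 : ∑ c ∈ Finset.Icc 1 K, ∑ i ∈ Finset.Icc 1 (n - c), genFib K i
      = ∑ c ∈ Finset.Icc 1 (min K (n - 1)), ∑ i ∈ Finset.Icc 1 (n - c), genFib K i := by
    rw [Finset.sum_subset (Finset.Icc_subset_Icc_right (min_le_left _ _))]
    intro x hx hx'
    rw [Finset.mem_Icc] at hx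
    have : ¬ (1 ≤ x ∧ x ≤ min K (n - 1)) := by simpa [Finset.mem_Icc] using hx'
    have hxn : n - x = 0 := by omega
    rw [hxn]
    simp
  rw [h5]
  have : genFib K 1 = 1 := by simp [genFib]
  omega

end GenFib

lemma fbs_bounds {n : ℕ} (h0 : 0 < n) (π : Equiv.Perm (Fin n)) :
    1 ≤ fbs π ∧ fbs π ≤ n := by
  unfold fbs
  by_cases h : (Desc π).Nonempty
  · rw [dif_pos h]
    have hmem := (Desc π).min'_mem h
    rw [mem_Desc] at hmem
    obtain ⟨j, hj, _⟩ := hmem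
    have := j.isLt
    omega
  · rw [dif_neg h]
    omega

lemma card_valid (K n : ℕ) : 1 ≤ n →
    Nat.card {π : Equiv.Perm (Fin n) // Cond1 π ∧ Cond2 K π}
      = ∑ i ∈ Finset.Icc 1 n, genFib K i := by
  induction n using Nat.strong_induction_on with
  | _ n ih =>
  intro hn
  classical
  rw [Nat.card_eq_fintype_card, Fintype.card_subtype]
  set V : Finset (Equiv.Perm (Fin n)) :=
    Finset.univ.filter (fun π => Cond1 π ∧ Cond2 K π) with hV
  have hmap : ∀ π ∈ V, fbs π ∈ Finset.Icc 1 n := by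
    intro π _
    rw [Finset.mem_Icc]
    exact fbs_bounds (by omega) π
  rw [Finset.card_eq_sum_card_fiberwise hmap]
  have hsplit : Finset.Icc 1 n = insert n (Finset.Icc 1 (n - 1)) := by
    ext x
    simp [Finset.mem_Icc, Finset.mem_insert]
    omega
  rw [hsplit, Finset.sum_insert (by simp [Finset.mem_Icc]; omega)]
  have hfib_n : (V.filter (fun π => fbs π = n)).card = 1 := by
    rw [Finset.card_eq_one]
    refine ⟨1, ?_⟩
    ext π
    simp only [hV, Finset.mem_filter, Finset.mem_univ, true_and, Finset.mem_singleton]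
    constructor
    · rintro ⟨⟨h1, _⟩, hf⟩
      exact eq_one_of_fbs_n (by omega) h1 hf
    · rintro rfl
      exact ⟨⟨cond1_one, cond2_one K⟩, fbs_one (by omega)⟩
  have hfib : ∀ c ∈ Finset.Icc 1 (n - 1), (V.filter (fun π => fbs π = c)).card
      = if c ≤ K then ∑ i ∈ Finset.Icc 1 (n - c), genFib K i else 0 := by
    intro c hc
    rw [Finset.mem_Icc] at hc
    have hc1 : 1 ≤ c := hc.1
    have hcn : c < n := by omega
    by_cases hcK : c ≤ K
    · rw [if_pos hcK, ← ih (n - c) (by omega) (by omega),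
        Nat.card_eq_fintype_card, Fintype.card_subtype]
      symm
      apply Finset.card_bij (fun π' _ => extPerm hc1 (le_of_lt hcn) π')
      · -- membership
        intro π' hπ'
        simp only [Finset.mem_filter, Finset.mem_univ, true_and] at hπ'
        simp only [hV, Finset.mem_filter, Finset.mem_univ, true_and]
        exact ⟨⟨cond1_ext hc1 (le_of_lt hcn) π' hπ'.1,
          cond2_ext hc1 (le_of_lt hcn) hcK π' hπ'.2⟩, fbs_ext hc1 hcn π'⟩
      · -- injectivity
        intro π₁ _ π₂ _ heq
        apply Equiv.ext
        intro j
        apply Fin.ext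
        have h1 := extPerm_ge' hc1 (le_of_lt hcn) π₁
          ⟨c + j, by have := j.isLt; omega⟩ j (by simp only [Fin.val_mk])
        have h2 := extPerm_ge' hc1 (le_of_lt hcn) π₂
          ⟨c + j, by have := j.isLt; omega⟩ j (by simp only [Fin.val_mk])
        rw [← h1, ← h2, heq]
      · -- surjectivity
        intro π hπ
        simp only [hV, Finset.mem_filter, Finset.mem_univ, true_and] at hπ
        obtain ⟨⟨hπ1, hπ2⟩, hπf⟩ := hπ
        obtain ⟨_, hfirst, hafter⟩ := struct_lemma hπ1 hπf hcn
        set g : Fin (n - c) → Fin (n - c) := fun j =>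
          ⟨(π ⟨c + j, by have := j.isLt; omega⟩ : ℕ),
            hafter (c + j) (by have := j.isLt; omega) (by omega)⟩ with hg
        have hginj : Function.Injective g := by
          intro a b hab
          rw [hg] at hab
          simp only [Fin.mk.injEq] at hab
          have : (⟨c + a, by have := a.isLt; omega⟩ : Fin n)
              = ⟨c + b, by have := b.isLt; omega⟩ :=
            π.injective (Fin.ext hab)
          have := congrArg Fin.val this
          simp only [Fin.val_mk] at this
          exact Fin.ext (by omega)
        set π' : Equiv.Perm (Fin (n - c)) :=
          Equiv.ofBijective g ((Finite.injective_iff_bijective).mp hginj) with hπ'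
        have hcomp : ∀ j : Fin (n - c),
            (π' j : ℕ) = (π ⟨c + j, by have := j.isLt; omega⟩ : ℕ) := fun j => rfl
        refine ⟨π', ?_, ?_⟩
        · simp only [Finset.mem_filter, Finset.mem_univ, true_and]
          exact ⟨cond1_res (le_of_lt hcn) hcomp hπ1, cond2_res (le_of_lt hcn) hcomp hπ2⟩
        · apply Equiv.ext
          intro i
          apply Fin.ext
          by_cases hi : (i : ℕ) < c
          · rw [extPerm_lt hc1 (le_of_lt hcn) π' i hi, hfirst i i.isLt hi]
          · rw [extPerm_ge' hc1 (le_of_lt hcn) π' i ⟨(i : ℕ) - c, by have := i.isLt; omega⟩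
              (by simp only [Fin.val_mk]; omega), hcomp]
            exact congrArg Fin.val (congrArg π (Fin.ext (by simp only [Fin.val_mk]; omega)))
    · rw [if_neg hcK, Finset.card_eq_zero, Finset.eq_empty_iff_forall_notMem]
      intro π hπ
      simp only [hV, Finset.mem_filter, Finset.mem_univ, true_and] at hπ
      obtain ⟨⟨h1, h2⟩, hf⟩ := hπ
      exact hcK (fbs_le_K h1 h2 hf hcn)
  rw [Finset.sum_congr rfl hfib, hfib_n, ← Finset.sum_filter,
    show Finset.filter (fun c => c ≤ K) (Finset.Icc 1 (n - 1))
      = Finset.Icc 1 (min K (n - 1)) from by ext x; simp [Finset.mem_Icc]; omega,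
    ← hsplit, genFib_sum_rec K n hn]

theorem avoid_132_213_23k1_eq_sum_genFib (k n : ℕ) (hk : 2 ≤ k) (hn : 1 ≤ n) :
    AvoidCount [[1, 3, 2], [2, 1, 3], ((List.range (k - 1)).map (· + 2)) ++ [1]] n
      = ∑ i ∈ Finset.Icc 1 n, genFib (k - 2) i := by
  rw [← card_valid (k - 2) n hn]
  unfold AvoidCount
  apply Nat.card_congr
  apply Equiv.subtypeEquivRight
  intro π
  constructor
  · intro h
    have h132 := h [1, 3, 2] (by simp)
    have h213 := h [2, 1, 3] (by simp)
    have hK : AvoidsPat π (sK k) := h (sK k) (by simp [sK])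
    have h1 := cond1_of_avoids h132 h213
    exact ⟨h1, cond2_of_avoids hk h1 hK⟩
  · rintro ⟨h1, h2⟩ s hs
    simp only [List.mem_cons, List.mem_singleton, List.not_mem_nil, or_false] at hs
    rcases hs with rfl | rfl | rfl
    · exact avoids132_of_cond1 h1
    · exact avoids213_of_cond1 h1
    · exact avoidsK_of_cond12 hk h1 h2
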